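/- Permutation-masking sufficiency: let X^n, Y^n be F^n-valued random variables, let Z^n be uniform on (F\{0})^n and π uniform on the permutations of {1,…,n}, with (Z^n, π) independent of (X^n, Y^n). Then the random sequence S := π(Z^n ⊗ (X^n ⊖ Y^n)) is conditionally independent of (X^n, Y^n) given the Hamming distance d_H(X^n, Y^n); equivalently I(S; X^n, Y^n | d_H(X^n, Y^n)) = 0. -/

import Mathlib

def pmfOf {Ω α : Type*} [Fintype Ω] [DecidableEq α] (p : Ω → ℝ) (A : Ω → α) (a : α) : ℝ :=
  ∑ ω, if A ω = a then p ω else 0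

noncomputable def entH {Ω α : Type*} [Fintype Ω] [Fintype α] [DecidableEq α]
    (p : Ω → ℝ) (A : Ω → α) : ℝ :=
  ∑ a, Real.negMulLog (pmfOf p A a)

noncomputable def cmi {Ω α β γ : Type*} [Fintype Ω] [Fintype α] [Fintype β] [Fintype γ]
    [DecidableEq α] [DecidableEq β] [DecidableEq γ]
    (p : Ω → ℝ) (A : Ω → α) (X : Ω → β) (B : Ω → γ) : ℝ :=
  entH p (fun ω => (A ω, B ω)) + entH p (fun ω => (X ω, B ω))
    - entH p (fun ω => (A ω, X ω, B ω)) - entH p B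

section Lemmas
variable {Ω α β γ : Type*} [Fintype Ω] [DecidableEq α] [DecidableEq β] [DecidableEq γ]
variable (p : Ω → ℝ)

lemma pmfOf_nonneg (hp0 : ∀ ω, 0 ≤ p ω) (A : Ω → α) (a : α) : 0 ≤ pmfOf p A a :=
by
  refine Finset.sum_nonneg fun ω _ => ?_
  split
  · exact hp0 ω
  · exact le_rfl

lemma marg_fst [Fintype α] (U : Ω → α) (V : Ω → β) (b : β) :
    ∑ a, pmfOf p (fun ω => (U ω, V ω)) (a, b) = pmfOf p V b := by
  unfold pmfOf
  rw [Finset.sum_comm]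
  refine Finset.sum_congr rfl fun ω _ => ?_
  simp [Prod.ext_iff, ite_and]

lemma marg_mid [Fintype β] (U : Ω → α) (V : Ω → β) (W : Ω → γ) (a : α) (b : γ) :
    ∑ x, pmfOf p (fun ω => (U ω, V ω, W ω)) (a, x, b)
      = pmfOf p (fun ω => (U ω, W ω)) (a, b) := by
  unfold pmfOf
  rw [Finset.sum_comm]
  refine Finset.sum_congr rfl fun ω _ => ?_
  by_cases h : U ω = a ∧ V ω = V ω ∧ W ω = b <;>
    simp_all [Prod.ext_iff, ite_and]

lemma cmi_eq_zero_of_factor [Fintype α] [Fintype β] [Fintype γ]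
    (hp0 : ∀ ω, 0 ≤ p ω)
    (A : Ω → α) (Xv : Ω → β) (B : Ω → γ) (f : γ → α → ℝ)
    (hfac : ∀ a x b, pmfOf p (fun ω => (A ω, Xv ω, B ω)) (a, x, b)
      = f b a * pmfOf p (fun ω => (Xv ω, B ω)) (x, b)) :
    cmi p A Xv B = 0 := by
  set q : β → γ → ℝ := fun x b => pmfOf p (fun ω => (Xv ω, B ω)) (x, b) with hq
  have hq0 : ∀ x b, 0 ≤ q x b := fun x b => pmfOf_nonneg p hp0 _ _
  have hpB : ∀ b, pmfOf p B b = ∑ x, q x b := fun b => (marg_fst p Xv B b).symm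
  have hAB : ∀ a b, pmfOf p (fun ω => (A ω, B ω)) (a, b) = f b a * pmfOf p B b := by
    intro a b
    rw [← marg_mid p A Xv B a b]
    calc ∑ x, pmfOf p (fun ω => (A ω, Xv ω, B ω)) (a, x, b)
        = ∑ x, f b a * q x b := Finset.sum_congr rfl fun x _ => hfac a x b
      _ = f b a * ∑ x, q x b := by rw [Finset.mul_sum]
      _ = f b a * pmfOf p B b := by rw [← hpB]
  have hqle : ∀ x b, q x b ≤ pmfOf p B b := by
    intro x b
    rw [hpB]
    exact Finset.single_le_sum (fun x _ => hq0 x b) (Finset.mem_univ x)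
  have hnorm : ∀ b, pmfOf p B b ≠ 0 → ∑ a, f b a = 1 := by
    intro b hb
    have h1 : ∑ a, pmfOf p (fun ω => (A ω, B ω)) (a, b) = pmfOf p B b := marg_fst p A B b
    have h2 : (∑ a, f b a) * pmfOf p B b = pmfOf p B b := by
      rw [Finset.sum_mul]
      calc ∑ a, f b a * pmfOf p B b
          = ∑ a, pmfOf p (fun ω => (A ω, B ω)) (a, b) :=
            Finset.sum_congr rfl fun a _ => (hAB a b).symm
        _ = pmfOf p B b := h1
    exact mul_right_cancel₀ hb (by rw [h2, one_mul])
  -- entropy of (A,B)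
  have eAB : entH p (fun ω => (A ω, B ω))
      = (∑ b, pmfOf p B b * ∑ a, Real.negMulLog (f b a)) + entH p B := by
    unfold entH
    rw [Fintype.sum_prod_type, Finset.sum_comm, ← Finset.sum_add_distrib]
    refine Finset.sum_congr rfl fun b _ => ?_
    by_cases hb : pmfOf p B b = 0
    · simp [hb, hAB, Real.negMulLog]
    · have : ∑ a, Real.negMulLog (pmfOf p (fun ω => (A ω, B ω)) (a, b))
          = ∑ a, (pmfOf p B b * Real.negMulLog (f b a)
              + f b a * Real.negMulLog (pmfOf p B b)) := by
        refine Finset.sum_congr rfl fun a _ => ?_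
        rw [hAB, Real.negMulLog_mul]
      rw [this, Finset.sum_add_distrib, ← Finset.mul_sum, ← Finset.sum_mul, hnorm b hb,
        one_mul]
  -- entropy of (A,Xv,B)
  have eAXB : entH p (fun ω => (A ω, Xv ω, B ω))
      = (∑ b, pmfOf p B b * ∑ a, Real.negMulLog (f b a))
        + entH p (fun ω => (Xv ω, B ω)) := by
    unfold entH
    rw [Fintype.sum_prod_type]
    have step : ∀ a : α, ∑ xb : β × γ,
        Real.negMulLog (pmfOf p (fun ω => (A ω, Xv ω, B ω)) (a, xb))
        = ∑ xb : β × γ, (q xb.1 xb.2 * Real.negMulLog (f xb.2 a)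
            + f xb.2 a * Real.negMulLog (q xb.1 xb.2)) := by
      intro a
      refine Finset.sum_congr rfl fun xb _ => ?_
      obtain ⟨x, b⟩ := xb
      rw [show ((a, (x, b)) : α × β × γ) = (a, x, b) by rfl, hfac, Real.negMulLog_mul]
    rw [Finset.sum_congr rfl fun a _ => step a]
    have swap : ∑ a, ∑ xb : β × γ, (q xb.1 xb.2 * Real.negMulLog (f xb.2 a)
          + f xb.2 a * Real.negMulLog (q xb.1 xb.2))
        = (∑ xb : β × γ, q xb.1 xb.2 * ∑ a, Real.negMulLog (f xb.2 a))
          + ∑ xb : β × γ, (∑ a, f xb.2 a) * Real.negMulLog (q xb.1 xb.2) := by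
      rw [Finset.sum_comm, ← Finset.sum_add_distrib]
      refine Finset.sum_congr rfl fun xb _ => ?_
      rw [Finset.sum_add_distrib, ← Finset.mul_sum, ← Finset.sum_mul]
    rw [swap]
    have h1 : (∑ xb : β × γ, q xb.1 xb.2 * ∑ a, Real.negMulLog (f xb.2 a))
        = ∑ b, pmfOf p B b * ∑ a, Real.negMulLog (f b a) := by
      rw [Fintype.sum_prod_type_right]
      refine Finset.sum_congr rfl fun b _ => ?_
      dsimp only
      rw [← Finset.sum_mul, ← hpB]
    have h2 : (∑ xb : β × γ, (∑ a, f xb.2 a) * Real.negMulLog (q xb.1 xb.2))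
        = ∑ xb : β × γ, Real.negMulLog (pmfOf p (fun ω => (Xv ω, B ω)) xb) := by
      refine Finset.sum_congr rfl fun xb _ => ?_
      obtain ⟨x, b⟩ := xb
      by_cases hb : pmfOf p B b = 0
      · have h0 : q x b = 0 := le_antisymm (hb ▸ hqle x b) (hq0 _ _)
        simp only [hq] at h0 ⊢
        simp [h0, Real.negMulLog]
      · rw [hnorm _ hb, one_mul]
    rw [h1, h2]
  unfold cmi
  rw [eAB, eAXB]
  ring

end Lemmas

section Lemmas
variable {Ω α β γ : Type*} [Fintype Ω] [DecidableEq α] [DecidableEq β] [DecidableEq γ]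
variable (p : Ω → ℝ)

lemma pmf_fn (V : Ω → β) (g : β → γ) (b : β) (c : γ) :
    pmfOf p (fun ω => (V ω, g (V ω))) (b, c)
      = if g b = c then pmfOf p V b else 0 := by
  unfold pmfOf
  by_cases h : g b = c
  · rw [if_pos h]
    refine Finset.sum_congr rfl fun ω _ => ?_
    by_cases h2 : V ω = b <;> simp [Prod.ext_iff, h2, h]
  · rw [if_neg h]
    refine Finset.sum_eq_zero fun ω _ => ?_
    refine if_neg fun heq => h ?_
    obtain ⟨h1, h2⟩ : V ω = b ∧ g (V ω) = c := by simpa [Prod.ext_iff] using heq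
    exact h1 ▸ h2

lemma pmf_pair_fn (U : Ω → α) (V : Ω → β) (g : β → γ) (a : α) (b : β) (c : γ) :
    pmfOf p (fun ω => (U ω, V ω, g (V ω))) (a, b, c)
      = if g b = c then pmfOf p (fun ω => (U ω, V ω)) (a, b) else 0 := by
  unfold pmfOf
  by_cases h : g b = c
  · rw [if_pos h]
    refine Finset.sum_congr rfl fun ω _ => ?_
    by_cases h2 : V ω = b <;> simp [Prod.ext_iff, h2, h]
  · rw [if_neg h]
    refine Finset.sum_eq_zero fun ω _ => ?_
    refine if_neg fun heq => h ?_
    obtain ⟨h0, h1, h2⟩ : U ω = a ∧ V ω = b ∧ g (V ω) = c := by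
      simpa [Prod.ext_iff] using heq
    exact h1 ▸ h2

lemma pmf_comp [Fintype α] (W : Ω → α) (V : Ω → β) (g : α → β → γ) (c0 : γ) (v : β) :
    pmfOf p (fun ω => (g (W ω) (V ω), V ω)) (c0, v)
      = ∑ w : α, (if g w v = c0 then pmfOf p (fun ω => (W ω, V ω)) (w, v) else 0) := by
  unfold pmfOf
  have key : ∀ w : α, (if g w v = c0 then (∑ ω, if (W ω, V ω) = (w, v) then p ω else 0) else 0)
      = ∑ ω, (if W ω = w then (if g w v = c0 ∧ V ω = v then p ω else 0) else 0) := by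
    intro w
    split_ifs with h
    · refine Finset.sum_congr rfl fun ω _ => ?_
      by_cases h2 : W ω = w <;> simp [Prod.ext_iff, h2, h]
    · refine (Finset.sum_eq_zero fun ω _ => ?_).symm
      simp [h]
  rw [Finset.sum_congr rfl fun w _ => key w, Finset.sum_comm]
  refine Finset.sum_congr rfl fun ω _ => ?_
  rw [Finset.sum_ite_eq Finset.univ (W ω) (fun w => if g w v = c0 ∧ V ω = v then p ω else 0),
    if_pos (Finset.mem_univ _)]
  by_cases h2 : V ω = v <;> simp [Prod.ext_iff, h2] <;> subst h2 <;> tauto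

end Lemmas

section Count
variable {n : ℕ} {F : Type*} [Field F] [Fintype F] [DecidableEq F]

/-- counting sum with explicit weights -/
noncomputable def cntW (w s : Fin n → F) : ℝ :=
  ∑ z : Fin n → F, ∑ σ : Equiv.Perm (Fin n),
    if (∀ j, z j ≠ 0) ∧ (∀ i, z (σ i) * w (σ i) = s i) then (1:ℝ) else 0

/-- counting sum depending only on a support set -/
noncomputable def cntP (T : Finset (Fin n)) (s : Fin n → F) : ℝ :=
  ∑ z : Fin n → F, ∑ σ : Equiv.Perm (Fin n),
    if (∀ j, z j ≠ 0) ∧ (∀ i, (if σ i ∈ T then z (σ i) else 0) = s i) then (1:ℝ) else 0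

def scaleEquiv (w : Fin n → F) : (Fin n → F) ≃ (Fin n → F) where
  toFun z j := if w j = 0 then z j else z j * (w j)⁻¹
  invFun z j := if w j = 0 then z j else z j * w j
  left_inv z := by
    funext j
    by_cases h : w j = 0
    · simp [h]
    · simp only [h, if_false]
      field_simp
  right_inv z := by
    funext j
    by_cases h : w j = 0
    · simp [h]
    · simp only [h, if_false]
      field_simp

@[simp] lemma scaleEquiv_apply (w z : Fin n → F) (j : Fin n) :
    scaleEquiv w z j = if w j = 0 then z j else z j * (w j)⁻¹ := rfl

lemma cntW_eq_cntP (w s : Fin n → F) :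
    cntW w s = cntP (Finset.univ.filter fun j => w j ≠ 0) s := by
  unfold cntW cntP
  rw [← Equiv.sum_comp (scaleEquiv w) (fun z => ∑ σ : Equiv.Perm (Fin n),
    if (∀ j, z j ≠ 0) ∧ (∀ i, z (σ i) * w (σ i) = s i) then (1:ℝ) else 0)]
  refine Finset.sum_congr rfl fun z _ => Finset.sum_congr rfl fun σ _ => ?_
  refine if_congr (and_congr ?_ ?_) rfl rfl
  · refine forall_congr' fun j => ?_
    by_cases h : w j = 0
    · simp [h]
    · simp [h, inv_ne_zero h]
  · refine forall_congr' fun i => ?_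
    by_cases h : w (σ i) = 0
    · simp [h]
    · simp only [scaleEquiv_apply, h, if_false, Finset.mem_filter, Finset.mem_univ,
        true_and, ne_eq, not_false_iff, if_true, inv_mul_cancel_right₀ h]

lemma exists_perm_iff (T T' : Finset (Fin n)) (h : T.card = T'.card) :
    ∃ τ : Equiv.Perm (Fin n), ∀ j, τ j ∈ T ↔ j ∈ T' := by
  have h1 : Fintype.card {j // j ∈ T'} = Fintype.card {j // j ∈ T} := by
    simp [Fintype.card_coe, h]
  have h2 : Fintype.card {j // ¬ j ∈ T'} = Fintype.card {j // ¬ j ∈ T} := by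
    rw [Fintype.card_subtype_compl, Fintype.card_subtype_compl, h1]
  let e1 := Fintype.equivOfCardEq h1
  let e2 := Fintype.equivOfCardEq h2
  refine ⟨(Equiv.sumCompl (· ∈ T')).symm.trans ((e1.sumCongr e2).trans
    (Equiv.sumCompl (· ∈ T))), fun j => ?_⟩
  by_cases hj : j ∈ T'
  · simp only [Equiv.trans_apply, Equiv.sumCompl_symm_apply_of_pos hj, Equiv.sumCongr_apply,
      Sum.map_inl, Equiv.sumCompl_apply_inl]
    exact iff_of_true (e1 ⟨j, hj⟩).2 hj
  · simp only [Equiv.trans_apply, Equiv.sumCompl_symm_apply_of_neg hj, Equiv.sumCongr_apply,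
      Sum.map_inr, Equiv.sumCompl_apply_inr]
    exact iff_of_false (e2 ⟨j, hj⟩).2 hj

lemma cntP_card_eq (T T' : Finset (Fin n)) (h : T.card = T'.card) (s : Fin n → F) :
    cntP T s = cntP T' s := by
  obtain ⟨τ, hτ⟩ := exists_perm_iff T T' h
  unfold cntP
  rw [← Equiv.sum_comp (Equiv.arrowCongr τ (Equiv.refl F)) (fun z => ∑ σ : Equiv.Perm (Fin n),
    if (∀ j, z j ≠ 0) ∧ (∀ i, (if σ i ∈ T then z (σ i) else 0) = s i) then (1:ℝ) else 0)]
  refine Finset.sum_congr rfl fun z _ => ?_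
  rw [← Equiv.sum_comp (Equiv.mulLeft τ) (fun σ : Equiv.Perm (Fin n) =>
    if (∀ j, Equiv.arrowCongr τ (Equiv.refl F) z j ≠ 0)
      ∧ (∀ i, (if σ i ∈ T then Equiv.arrowCongr τ (Equiv.refl F) z (σ i) else 0) = s i)
      then (1:ℝ) else 0)]
  refine Finset.sum_congr rfl fun σ _ => ?_
  refine if_congr (and_congr ?_ ?_) rfl rfl
  · constructor
    · intro hz m
      have h := hz (τ m)
      simpa [Equiv.arrowCongr] using h
    · intro hz j
      simpa [Equiv.arrowCongr] using hz (τ.symm j)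
  · refine forall_congr' fun i => ?_
    have h1 : (Equiv.mulLeft τ σ) i = τ (σ i) := rfl
    have h2 : Equiv.arrowCongr τ (Equiv.refl F) z (τ (σ i)) = z (σ i) := by
      simp [Equiv.arrowCongr]
    rw [h1, h2]
    by_cases hm : σ i ∈ T' <;> simp [(hτ (σ i)), hm]

lemma card_filter_lt (n d : ℕ) (h : d ≤ n) :
    (Finset.univ.filter fun j : Fin n => (j : ℕ) < d).card = d := by
  refine Finset.card_eq_of_bijective (fun k hk => ⟨k, lt_of_lt_of_le hk h⟩) ?_ ?_ ?_
  · intro a ha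
    simp only [Finset.mem_filter] at ha
    exact ⟨a, ha.2, by simp⟩
  · intro k hk
    simp [hk]
  · intro k k' hk hk' he
    simpa using congrArg Fin.val he

end Count


/-- Permutation-masking sufficiency: with `Z^n` uniform on
`(F\{0})^n`, `π` uniform on permutations, `Z^n` and `π` independent of each
other and jointly independent of `(X^n, Y^n)`, the sequence
`S = π(Z^n ⊗ (X^n ⊖ Y^n))` satisfies `I(S ; X^n, Y^n | d_H(X^n, Y^n)) = 0`. -/
theorem permutation_masking_sufficiency {Ω F : Type*} [Fintype Ω] [Field F]
    [Fintype F] [DecidableEq F] (n : ℕ)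
    (p : Ω → ℝ) (hp0 : ∀ ω, 0 ≤ p ω) (hp1 : ∑ ω, p ω = 1)
    (X Y Z : Ω → (Fin n → F)) (Pm : Ω → Equiv.Perm (Fin n))
    (hZunif : ∀ z : Fin n → F,
      pmfOf p Z z = if ∀ i, z i ≠ 0 then 1 / ((Fintype.card F : ℝ) - 1) ^ n else 0)
    (hPmunif : ∀ σ : Equiv.Perm (Fin n), pmfOf p Pm σ = 1 / (Nat.factorial n : ℝ))
    (hZPmindep : ∀ (z : Fin n → F) (σ : Equiv.Perm (Fin n)),
      pmfOf p (fun ω => (Z ω, Pm ω)) (z, σ) = pmfOf p Z z * pmfOf p Pm σ)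
    (hindep : ∀ (z : Fin n → F) (σ : Equiv.Perm (Fin n)) (x y : Fin n → F),
      pmfOf p (fun ω => ((Z ω, Pm ω), (X ω, Y ω))) ((z, σ), (x, y)) =
        pmfOf p (fun ω => (Z ω, Pm ω)) (z, σ) * pmfOf p (fun ω => (X ω, Y ω)) (x, y)) :
    cmi p
      (fun ω => fun i => Z ω (Pm ω i) * (X ω (Pm ω i) - Y ω (Pm ω i)))
      (fun ω => (X ω, Y ω))
      (fun ω => Fin.ofNat (n+1) (hammingDist (X ω) (Y ω))) = 0 := by
  classical
  set r : ℝ := 1 / ((Fintype.card F : ℝ) - 1) ^ n with hr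
  set v : ℝ := 1 / (Nat.factorial n : ℝ) with hv
  set T : Fin (n+1) → Finset (Fin n) :=
    fun d => Finset.univ.filter fun j : Fin n => (j : ℕ) < (d : ℕ) with hT
  -- the conditional density of S given the hamming distance
  refine cmi_eq_zero_of_factor p hp0 _ _ _
    (fun d s => cntP (T d) s * (r * v)) ?_
  rintro s ⟨x, y⟩ d
  have hDfn := pmf_pair_fn p
    (fun ω => fun i => Z ω (Pm ω i) * (X ω (Pm ω i) - Y ω (Pm ω i)))
    (fun ω => (X ω, Y ω))
    (fun xy : (Fin n → F) × (Fin n → F) => Fin.ofNat (n+1) (hammingDist xy.1 xy.2))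
    s (x, y) d
  have hDfn2 := pmf_fn p (fun ω => (X ω, Y ω))
    (fun xy : (Fin n → F) × (Fin n → F) => Fin.ofNat (n+1) (hammingDist xy.1 xy.2))
    (x, y) d
  rw [hDfn, hDfn2]
  by_cases hd : (Fin.ofNat (n+1) (hammingDist x y) = d)
  · simp only [hd, if_pos]
    -- main identity
    have hA := pmf_comp p (fun ω => (Z ω, Pm ω)) (fun ω => (X ω, Y ω))
      (fun w v => fun i => w.1 (w.2 i) * (v.1 (w.2 i) - v.2 (w.2 i))) s (x, y)
    have hA2 : pmfOf p (fun ω =>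
        ((fun i => Z ω (Pm ω i) * (X ω (Pm ω i) - Y ω (Pm ω i))), (X ω, Y ω))) (s, (x, y))
        = cntW (fun i => x i - y i) s
          * (r * v * pmfOf p (fun ω => (X ω, Y ω)) (x, y)) := by
      rw [hA, Fintype.sum_prod_type]
      unfold cntW
      simp only [Finset.sum_mul]
      refine Finset.sum_congr rfl fun z _ => Finset.sum_congr rfl fun σ _ => ?_
      rw [hindep z σ x y, hZPmindep z σ, hZunif z, hPmunif σ]
      by_cases h1 : ∀ j, z j ≠ 0 <;>
        by_cases h2 : ∀ i, z (σ i) * (x (σ i) - y (σ i)) = s i <;>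
        simp [funext_iff, h1, h2] <;> ring
    have hcnt : cntW (fun i => x i - y i) s = cntP (T d) s := by
      rw [cntW_eq_cntP]
      refine cntP_card_eq _ _ ?_ s
      have e1 : (Finset.univ.filter fun j => x j - y j ≠ 0)
          = (Finset.univ.filter fun j => x j ≠ y j) := by
        apply Finset.filter_congr
        intro j _
        simp [sub_ne_zero]
      have hdle : hammingDist x y ≤ n := by
        simpa using hammingDist_le_card_fintype (x := x) (y := y)
      have hval : ((Fin.ofNat (n+1) (hammingDist x y) : Fin (n+1)) : ℕ) = hammingDist x y := by
        rw [Fin.val_ofNat]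
        exact Nat.mod_eq_of_lt (by omega)
      have hdv : (d : ℕ) = hammingDist x y := by rw [← hd, hval]
      rw [e1, hT]
      rw [card_filter_lt n (d : ℕ) (by omega)]
      rw [hdv]
      rfl
    rw [hA2, hcnt]
    ring
  · simp only [hd, if_false, mul_zero]
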